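/- Let p ∈ ℂ[X] be a Shabat polynomial of degree n ≥ 2 whose coefficient of Xⁿ⁻¹ is zero, and suppose the sum of the distinct complex roots of p − 1 equals 0. Then there exist no α, β ∈ ℂ with α ≠ 0 such that the polynomial q(z) = p(αz + β) is in Zapponi form; i.e., no affine change of variable brings p to Zapponi form. -/

import Mathlib

open Polynomial

private lemma sum_roots_zero (f : Polynomial ℂ) (h0 : f.natDegree ≠ 0)
    (hc : f.coeff (f.natDegree - 1) = 0) : f.roots.sum = 0 := by
  have hf : f ≠ 0 := fun h => h0 (by simp [h])
  have hlc : f.leadingCoeff ≠ 0 := leadingCoeff_ne_zero.2 hf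
  set g := f * C f.leadingCoeff⁻¹ with hg
  have hgm : g.Monic := monic_mul_leadingCoeff_inv hf
  have hroots : g.roots = f.roots := by
    rw [hg, mul_comm, roots_C_mul _ (inv_ne_zero hlc)]
  have hdeg : g.natDegree = f.natDegree := natDegree_mul_C (inv_ne_zero hlc)
  have hnext : g.nextCoeff = 0 := by
    rw [nextCoeff_of_natDegree_pos (by rw [hdeg]; omega), hdeg, hg, coeff_mul_C]
    rw [hc, zero_mul]
  have h := (IsAlgClosed.splits g).nextCoeff_eq_neg_sum_roots_of_monic hgm
  rw [hnext, hroots] at h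
  exact neg_eq_zero.mp h.symm


/-- If `p` is a Shabat polynomial of degree `n ≥ 2` with vanishing coefficient of
`X^(n-1)` and the sum of the distinct roots of `p - 1` is zero, then no affine
change of variable `z ↦ αz + β` (with `α ≠ 0`) brings `p` to Zapponi form. -/
theorem shabat_no_zapponi_form_of_sum_eq_zero
    (p : Polynomial ℂ) (n : ℕ) (hn : 2 ≤ n) (hdeg : p.natDegree = n)
    (hShabat : ∀ z : ℂ, (Polynomial.derivative p).eval z = 0 →
      p.eval z = 1 ∨ p.eval z = -1)
    (hcoeff : p.coeff (n - 1) = 0)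
    (hsum : ((p - 1).roots.toFinset.sum id) = 0) :
    ¬ ∃ (α β : ℂ) (q : Polynomial ℂ), α ≠ 0 ∧
      (∀ z : ℂ, q.eval z = p.eval (α * z + β)) ∧
      ((q - 1).roots.toFinset.sum id) = 1 ∧
      ((q + 1).roots.toFinset.sum id) = -1 := by
  classical
  rintro ⟨α, β, q, hα, hq, hq1, hq2⟩
  have hp0 : p ≠ 0 := fun h => by simp [h] at hdeg; omega
  have hone : natDegree (1 : Polynomial ℂ) < p.natDegree := by
    simp [hdeg]; omega
  -- A = p - 1, B = p + 1
  have hAdeg : (p - 1).natDegree = n := by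
    rw [natDegree_sub_eq_left_of_natDegree_lt hone, hdeg]
  have hBeq : p + 1 = p - (-1) := by ring
  have hBdeg : (p + 1).natDegree = n := by
    rw [hBeq, natDegree_sub_eq_left_of_natDegree_lt (by simpa using hone), hdeg]
  have hA0 : p - 1 ≠ 0 := fun h => by simp [h] at hAdeg; omega
  have hB0 : p + 1 ≠ 0 := fun h => by simp [h] at hBdeg; omega
  -- sums of all roots of A and B vanish
  have hAc : (p - 1).coeff ((p-1).natDegree - 1) = 0 := by
    rw [hAdeg, coeff_sub, hcoeff, coeff_one]
    simp; omega
  have hBc : (p + 1).coeff ((p+1).natDegree - 1) = 0 := by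
    rw [hBdeg, coeff_add, hcoeff, coeff_one]
    simp; omega
  have hAsum : (p - 1).roots.sum = 0 :=
    sum_roots_zero _ (by rw [hAdeg]; omega) hAc
  have hBsum : (p + 1).roots.sum = 0 :=
    sum_roots_zero _ (by rw [hBdeg]; omega) hBc
  -- derivative facts
  set D := derivative p with hD
  have hpn : p.coeff n ≠ 0 := by
    rw [← hdeg]; exact leadingCoeff_ne_zero.2 hp0
  have hDc' : D.coeff (n-1) ≠ 0 := by
    rw [hD, coeff_derivative, show n - 1 + 1 = n by omega]
    simp only [ne_eq, mul_eq_zero, not_or]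
    exact ⟨hpn, Nat.cast_add_one_ne_zero _⟩
  have hD0 : D ≠ 0 := fun h => hDc' (by simp [h])
  have hDdeg : D.natDegree = n - 1 := by
    refine le_antisymm ?_ (le_natDegree_of_ne_zero hDc')
    have := natDegree_derivative_le p; rw [hdeg] at this; exact this
  have hDsum : D.roots.sum = 0 := by
    refine sum_roots_zero _ (by rw [hDdeg]; omega) ?_
    rw [hDdeg, show n - 1 - 1 = n - 2 by omega, hD, coeff_derivative,
      show n - 2 + 1 = n - 1 by omega, hcoeff, zero_mul]
  -- roots of D are roots of A and B with multiplicity one less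
  have key : D.roots = ((p-1).roots - (p-1).roots.dedup) + ((p+1).roots - (p+1).roots.dedup) := by
    refine Multiset.ext.mpr fun z => ?_
    rw [Multiset.count_add, Multiset.count_sub, Multiset.count_sub,
      count_roots, count_roots, count_roots, Multiset.count_dedup, Multiset.count_dedup]
    by_cases hzA : (p - 1).IsRoot z
    · have hzB : ¬ (p + 1).IsRoot z := by
        simp only [IsRoot, eval_sub, eval_one] at hzA
        simp only [IsRoot, eval_add, eval_one]
        intro h
        have h2 : (1 : ℂ) = -1 := by linear_combination h - hzA
        norm_num at h2
      have hDA : D = derivative (p - 1) := by simp [hD]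
      have hmem : z ∈ (p - 1).roots := (mem_roots hA0).2 hzA
      have hnmem : z ∉ (p + 1).roots := fun h => hzB ((mem_roots hB0).1 h)
      rw [hDA, derivative_rootMultiplicity_of_root hzA,
        rootMultiplicity_eq_zero hzB, if_pos hmem, if_neg hnmem]
      omega
    · by_cases hzB : (p + 1).IsRoot z
      · have hDB : D = derivative (p + 1) := by simp [hD]
        have hmem : z ∈ (p + 1).roots := (mem_roots hB0).2 hzB
        have hnmem : z ∉ (p - 1).roots := fun h => hzA ((mem_roots hA0).1 h)
        rw [hDB, derivative_rootMultiplicity_of_root hzB,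
          rootMultiplicity_eq_zero hzA, if_pos hmem, if_neg hnmem]
        omega
      · have hzD : ¬ D.IsRoot z := by
          intro h
          rcases hShabat z h with h1 | h1
          · exact hzA (by simp [IsRoot, h1])
          · exact hzB (by simp [IsRoot, h1])
        rw [rootMultiplicity_eq_zero hzD, rootMultiplicity_eq_zero hzA,
          rootMultiplicity_eq_zero hzB,
          if_neg (fun h => hzA ((mem_roots hA0).1 h)),
          if_neg (fun h => hzB ((mem_roots hB0).1 h))]
  -- sum of multiset differences
  have subsum : ∀ s : Multiset ℂ, (s - s.dedup).sum = s.sum - s.dedup.sum := by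
    intro s
    have h := congrArg Multiset.sum (tsub_add_cancel_of_le (Multiset.dedup_le s))
    rw [Multiset.sum_add] at h
    linear_combination h
  have tfs : ∀ s : Multiset ℂ, s.toFinset.sum id = s.dedup.sum := by
    intro s
    rw [Finset.sum, Multiset.toFinset_val, Multiset.map_id]
  -- deduce sum of distinct roots of p+1 is zero
  have hSB : (p + 1).roots.toFinset.sum id = 0 := by
    have h := congrArg Multiset.sum key
    rw [hDsum, Multiset.sum_add, subsum, subsum, hAsum, hBsum, ← tfs, ← tfs, hsum] at h
    linear_combination h
  -- the affine change of variables
  have hqp : q = p.comp (C α * X + C β) := by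
    refine Polynomial.funext fun z => ?_
    rw [hq z, eval_comp]
    simp
  have hqdeg : q.natDegree = n := by
    rw [hqp, natDegree_comp, natDegree_linear hα, hdeg, mul_one]
  have hq10 : q - 1 ≠ 0 := by
    intro h
    have := natDegree_sub_eq_left_of_natDegree_lt (by simp [hqdeg]; omega :
      natDegree (1 : Polynomial ℂ) < q.natDegree)
    rw [h] at this
    simp [hqdeg] at this
    omega
  have hq20 : q + 1 ≠ 0 := by
    intro h
    have h2 : q - (-1) = 0 := by rw [← h]; ring
    have := natDegree_sub_eq_left_of_natDegree_lt (by simp [hqdeg]; omega :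
      natDegree (-1 : Polynomial ℂ) < q.natDegree)
    rw [h2] at this
    simp [hqdeg] at this
    omega
  -- root set images
  have himg1 : (q - 1).roots.toFinset = (p - 1).roots.toFinset.image (fun r => (r - β) * α⁻¹) := by
    ext z
    simp only [Multiset.mem_toFinset, Finset.mem_image, mem_roots hq10, mem_roots hA0,
      IsRoot, eval_sub, eval_one]
    constructor
    · intro h
      refine ⟨α * z + β, ?_, by field_simp; ring⟩
      have := hq z
      linear_combination h - this
    · rintro ⟨r, hr, rfl⟩
      have := hq ((r - β) * α⁻¹)
      have hr' : α * ((r - β) * α⁻¹) + β = r := by field_simp; ring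
      rw [hr'] at this
      linear_combination this + hr
  have himg2 : (q + 1).roots.toFinset = (p + 1).roots.toFinset.image (fun r => (r - β) * α⁻¹) := by
    ext z
    simp only [Multiset.mem_toFinset, Finset.mem_image, mem_roots hq20, mem_roots hB0,
      IsRoot, eval_add, eval_one]
    constructor
    · intro h
      refine ⟨α * z + β, ?_, by field_simp; ring⟩
      have := hq z
      linear_combination h - this
    · rintro ⟨r, hr, rfl⟩
      have := hq ((r - β) * α⁻¹)
      have hr' : α * ((r - β) * α⁻¹) + β = r := by field_simp; ring
      rw [hr'] at this
      linear_combination this + hr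
  -- compute the two sums
  have hinj : ∀ (s : Finset ℂ), ∀ x ∈ s, ∀ y ∈ s, (x - β) * α⁻¹ = (y - β) * α⁻¹ → x = y := by
    intro s x _ y _ h
    field_simp at h
    linear_combination h
  rw [himg1, Finset.sum_image (hinj _)] at hq1
  rw [himg2, Finset.sum_image (hinj _)] at hq2
  set k := (p - 1).roots.toFinset.card with hk
  set l := (p + 1).roots.toFinset.card with hl
  have e1 : (0 - (k : ℂ) * β) * α⁻¹ = 1 := by
    rw [← hq1]
    rw [show ∀ S : Finset ℂ, (∑ x ∈ S, id ((x - β) * α⁻¹)) = (∑ x ∈ S, (x - β)) * α⁻¹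
      from fun S => by simp only [id]; rw [Finset.sum_mul]]
    congr 1
    rw [Finset.sum_sub_distrib, Finset.sum_const, ← hsum]
    simp [nsmul_eq_mul, hk]
  have e2 : (0 - (l : ℂ) * β) * α⁻¹ = -1 := by
    rw [← hq2]
    rw [show ∀ S : Finset ℂ, (∑ x ∈ S, id ((x - β) * α⁻¹)) = (∑ x ∈ S, (x - β)) * α⁻¹
      from fun S => by simp only [id]; rw [Finset.sum_mul]]
    congr 1
    rw [Finset.sum_sub_distrib, Finset.sum_const, ← hSB]
    simp [nsmul_eq_mul, hl]
  have e1' : -((k : ℂ) * β) = α := by field_simp at e1; linear_combination e1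
  have e2' : (l : ℂ) * β = α := by field_simp at e2; linear_combination -e2
  have hβ : β ≠ 0 := by
    intro h
    rw [h, mul_zero] at e2'
    exact hα e2'.symm
  have hkl : (k : ℂ) + (l : ℂ) = 0 := by
    have : ((k : ℂ) + l) * β = 0 := by linear_combination e2' - e1'
    rcases mul_eq_zero.1 this with h | h
    · exact h
    · exact absurd h hβ
  have hkl' : k + l = 0 := by
    have : ((k + l : ℕ) : ℂ) = 0 := by push_cast; exact hkl
    exact_mod_cast this
  have hk0 : k = 0 := by omega
  rw [hk0] at e1'
  simp at e1'
  exact hα e1'.symm
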